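/- For every simplicial set X, every Kan complex K, and every map f : K → X, there exists a unique map g : K → G(X) such that ε_X ∘ g = f. (Thus G is a right adjoint to the identity functor on simplicial sets relative to Kan complexes.) -/

import Mathlib

open CategoryTheory Simplicial CategoryTheory.Limits Opposite

namespace IndexedPaper
/-- The chaotic preorder on two objects. -/
inductive TwoObj : Type where
  | zero
  | one

instance : Preorder TwoObj where
  le _ _ := True
  le_refl _ := trivial
  le_trans _ _ _ _ _ := trivial

/-- `bΔ[1]`, the nerve of the groupoid with two objects and exactly one morphism
between every ordered pair of objects. -/
def bDelta1 : SSet := CategoryTheory.nerve TwoObj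

/-- `δ : Δ[1] ⟶ bΔ[1]`, classifying the morphism from the first object to the second. -/
noncomputable def deltaB : Δ[1] ⟶ bDelta1 :=
  (SSet.yonedaEquiv (X := bDelta1) (n := ⦋1⦌)).symm
    (CategoryTheory.ComposableArrows.mk₁ (homOfLE trivial : TwoObj.zero ⟶ TwoObj.one))

/-- An edge `x : Δ[1] ⟶ X` is invertible if it extends along `δ` to `bΔ[1]`. -/
def IsInvertibleEdge {X : SSet} (x : Δ[1] ⟶ X) : Prop :=
  ∃ y : bDelta1 ⟶ X, deltaB ≫ y = x

/-- A Kan complex: every horn (`n ≥ 1`, `0 ≤ k ≤ n`) has a filler. -/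
def IsKanComplex (K : SSet) : Prop :=
  ∀ ⦃n : ℕ⦄, 1 ≤ n → ∀ (k : Fin (n + 1)) (f : (Λ[n, k] : SSet) ⟶ K),
    ∃ g : Δ[n] ⟶ K, (Λ[n, k]).ι ≫ g = f

/-- A Kan fibration: right lifting property with respect to all horn inclusions
(`n ≥ 1`, `0 ≤ k ≤ n`). -/
def IsKanFibration {X Y : SSet} (p : X ⟶ Y) : Prop :=
  ∀ ⦃n : ℕ⦄, 1 ≤ n → ∀ (k : Fin (n + 1)), HasLiftingProperty (Λ[n, k]).ι p

/-! ### Yoneda naturality lemmas -/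

lemma yE_comp {X Y : SSet} (f : X ⟶ Y) {n : SimplexCategory}
    (g : SSet.stdSimplex.obj n ⟶ X) :
    SSet.yonedaEquiv (X := Y) (n := n) (g ≫ f) = f.app (op n) (SSet.yonedaEquiv (X := X) (n := n) g) := rfl

lemma yE_symm_comp {X Y : SSet} (f : X ⟶ Y) {n : SimplexCategory} (x : X.obj (op n)) :
    (SSet.yonedaEquiv (X := Y) (n := n)).symm (f.app (op n) x) = (SSet.yonedaEquiv (X := X) (n := n)).symm x ≫ f := by
  apply (SSet.yonedaEquiv (X := Y) (n := n)).injective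
  rw [Equiv.apply_symm_apply, yE_comp, Equiv.apply_symm_apply]

lemma yE_symm_map {X : SSet} {m n : SimplexCategory} (f : m ⟶ n) (x : X.obj (op n)) :
    (SSet.yonedaEquiv (X := X) (n := m)).symm (X.map f.op x) =
      SSet.stdSimplex.map f ≫ (SSet.yonedaEquiv (X := X) (n := n)).symm x := by
  exact uliftYonedaEquiv_symm_map f.op x

/-! ### The functor `G` -/

/-- The set of simplices of `X` all of whose edges are invertible. -/
def GSet (X : SSet) (n : SimplexCategoryᵒᵖ) : Set (X.obj n) :=
  {x | ∀ e : Δ[1] ⟶ SSet.stdSimplex.obj n.unop,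
    IsInvertibleEdge (e ≫ (SSet.yonedaEquiv (X := X) (n := n.unop)).symm x)}

/-- `G X`, the simplicial subset of `X` consisting of the simplices all of whose
edges are invertible. -/
def GObj (X : SSet) : SSet where
  obj n := GSet X n
  map := fun {n m} f => TypeCat.ofHom fun x => ⟨X.map f x.1, by
    intro e
    have h := x.2 (e ≫ SSet.stdSimplex.map f.unop)
    have heq : (SSet.yonedaEquiv (X := X) (n := m.unop)).symm (X.map f x.1) =
        SSet.stdSimplex.map f.unop ≫ (SSet.yonedaEquiv (X := X) (n := n.unop)).symm x.1 :=
      yE_symm_map f.unop x.1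
    rw [heq, ← Category.assoc]
    exact h⟩
  map_id n := by
    ext x
    exact X.map_id_apply _ x.1
  map_comp f g := by
    ext x
    exact X.map_comp_apply f g x.1

/-- `ε_X : G X ⟶ X`, the inclusion. -/
def epsilon (X : SSet) : GObj X ⟶ X where
  app n := TypeCat.ofHom fun x => x.1
  naturality _ _ _ := rfl

/-- The functorial action of `G` on a map of simplicial sets. -/
def Gmap {X Y : SSet} (f : X ⟶ Y) : GObj X ⟶ GObj Y where
  app n := TypeCat.ofHom fun x => ⟨f.app n x.1, by
    intro e
    obtain ⟨y, hy⟩ := x.2 e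
    refine ⟨y ≫ f, ?_⟩
    have : (SSet.yonedaEquiv (X := Y) (n := n.unop)).symm (f.app n x.1) =
        (SSet.yonedaEquiv (X := X) (n := n.unop)).symm x.1 ≫ f := yE_symm_comp f x.1
    simp only [this, ← Category.assoc, hy]⟩
  naturality n m g := by
    ext x
    have h := NatTrans.naturality_apply f g x.1
    exact Subtype.ext h



namespace EdgeInv


open SimplexCategory

/-- Morphism in `SimplexCategory` out of `x` from a `ℕ`-valued monotone function. -/
def toHom {x : SimplexCategory} {n : ℕ} (f : ℕ → ℕ) (hf : Monotone f) (hb : f x.len ≤ n) :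
    x ⟶ ⦋n⦌ :=
  SimplexCategory.Hom.mk
    ⟨fun j => ⟨f j.1, by
        have h1 : f j.1 ≤ f x.len := hf (Nat.le_of_lt_succ j.2)
        simp only [len_mk]
        omega⟩,
      fun _ _ h => hf h⟩

lemma toHom_eq {x : SimplexCategory} {n : ℕ} {f g : ℕ → ℕ} {hf : Monotone f} {hg : Monotone g}
    {hbf : f x.len ≤ n} {hbg : g x.len ≤ n}
    (h : ∀ j ≤ x.len, f j = g j) :
    toHom (x := x) (n := n) f hf hbf = toHom g hg hbg := by
  apply SimplexCategory.Hom.ext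
  apply OrderHom.ext
  funext j
  exact Fin.ext (h j.1 (Nat.le_of_lt_succ j.2))

/-- `K.map` along `toHom`. -/
def amap (K : SSet) {x : SimplexCategory} {n : ℕ} (f : ℕ → ℕ) (hf : Monotone f)
    (hb : f x.len ≤ n) : K.obj (op ⦋n⦌) → K.obj (op x) :=
  K.map (toHom f hf hb).op

/-- The `ℕ`-valued function underlying a morphism of `SimplexCategory`. -/
def vf {y x : SimplexCategory} (ψ : y ⟶ x) (j : ℕ) : ℕ :=
  (ψ.toOrderHom ⟨min j y.len, Nat.lt_succ_of_le (Nat.min_le_right _ _)⟩).1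

lemma vf_mono {y x : SimplexCategory} (ψ : y ⟶ x) : Monotone (vf ψ) := by
  intro a b h
  exact ψ.toOrderHom.monotone (by simp only [Fin.mk_le_mk]; omega)

lemma vf_le {y x : SimplexCategory} (ψ : y ⟶ x) (j : ℕ) : vf ψ j ≤ x.len :=
  Nat.le_of_lt_succ (ψ.toOrderHom _).2

lemma vf_eq {y x : SimplexCategory} (ψ : y ⟶ x) (j : Fin (y.len + 1)) :
    (ψ.toOrderHom j : ℕ) = vf ψ j.1 := by
  unfold vf
  congr 2
  exact (Fin.ext (Nat.min_eq_left (Nat.le_of_lt_succ j.2))).symm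

lemma comp_toHom {y x : SimplexCategory} (ψ : y ⟶ x) {n : ℕ} (f : ℕ → ℕ) (hf : Monotone f)
    (hb : f x.len ≤ n) (h1 : Monotone (f ∘ vf ψ)) (h2 : (f ∘ vf ψ) y.len ≤ n) :
    ψ ≫ toHom (x := x) f hf hb = toHom (f ∘ vf ψ) h1 h2 := by
  apply SimplexCategory.Hom.ext
  apply OrderHom.ext
  funext j
  apply Fin.ext
  show f ((ψ.toOrderHom j).1) = f (vf ψ j.1)
  rw [vf_eq]

lemma amap_congr {K : SSet} {x : SimplexCategory} {n : ℕ} {f g : ℕ → ℕ} {hf : Monotone f}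
    {hg : Monotone g} {hbf : f x.len ≤ n} {hbg : g x.len ≤ n}
    (h : ∀ j ≤ x.len, f j = g j) (z : K.obj (op ⦋n⦌)) :
    amap K f hf hbf z = amap K g hg hbg z := by
  unfold amap
  rw [toHom_eq h]

lemma amap_naturality {K : SSet} {y x : SimplexCategory} {n : ℕ} (ψ : y ⟶ x)
    (f : ℕ → ℕ) (hf : Monotone f) (hb : f x.len ≤ n) (h1 : Monotone (f ∘ vf ψ))
    (h2 : (f ∘ vf ψ) y.len ≤ n) (z : K.obj (op ⦋n⦌)) :
    K.map ψ.op (amap K f hf hb z) = amap K (f ∘ vf ψ) h1 h2 z := by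
  unfold amap
  rw [← FunctorToTypes.map_comp_apply, ← op_comp, comp_toHom ψ f hf hb h1 h2]

lemma amap_amap {K : SSet} {x : SimplexCategory} {p n : ℕ} (f g : ℕ → ℕ)
    (hf : Monotone f) (hbf : f x.len ≤ p) (hg : Monotone g) (hbg : g p ≤ n)
    (h1 : Monotone (g ∘ f)) (h2 : (g ∘ f) x.len ≤ n) (z : K.obj (op ⦋n⦌)) :
    amap K f hf hbf (amap K g hg hbg z) = amap K (g ∘ f) h1 h2 z := by
  rw [show amap K f hf hbf (amap K g hg hbg z)
      = K.map (toHom (x := x) f hf hbf).op (amap K g hg hbg z) from rfl]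
  rw [amap_naturality (toHom (x := x) f hf hbf) g hg hbg (hg.comp (vf_mono _))
    (by show g (vf (toHom (x := x) f hf hbf) x.len) ≤ n
        show g (f (min x.len x.len)) ≤ n
        rw [Nat.min_self]
        exact le_trans (hg hbf) hbg) z]
  exact amap_congr (fun j hj => by
    show g (f (min j x.len)) = g (f j)
    rw [Nat.min_eq_left hj]) z

lemma amap_id {K : SSet} {m : ℕ} (hf : Monotone (id : ℕ → ℕ)) (hb : (id : ℕ → ℕ) m ≤ m)
    (z : K.obj (op ⦋m⦌)) : amap K (x := ⦋m⦌) id hf hb z = z := by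
  have h : toHom (x := ⦋m⦌) (n := m) id hf hb = 𝟙 (⦋m⦌ : SimplexCategory) := by
    apply SimplexCategory.Hom.ext
    apply OrderHom.ext
    funext j
    exact Fin.ext rfl
  unfold amap
  rw [h, op_id, FunctorToTypes.map_id_apply]



/-- The canonical minimal monotone lift of the parity word of `f`. -/
def can (f : ℕ → ℕ) (j : ℕ) : ℕ := match j with
  | 0 => f 0 % 2
  | j + 1 => can f j + (if f (j + 1) % 2 = f j % 2 then 0 else 1)

lemma can_mod (f : ℕ → ℕ) : ∀ j, can f j % 2 = f j % 2 := by
  intro j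
  induction j with
  | zero => simp [can, Nat.mod_mod_of_dvd]
  | succ j ih =>
    rw [can]
    split
    · omega
    · next h =>
      have h1 := Nat.mod_two_eq_zero_or_one (f (j+1))
      have h2 := Nat.mod_two_eq_zero_or_one (f j)
      omega

lemma can_mono (f : ℕ → ℕ) : Monotone (can f) := by
  apply monotone_nat_of_le_succ
  intro j
  rw [can]
  split <;> omega

lemma can_succ_le (f : ℕ → ℕ) (j : ℕ) : can f (j + 1) ≤ can f j + 1 := by
  rw [can]; split <;> omega

lemma can_le_succ (f : ℕ → ℕ) : ∀ j, can f j ≤ j + 1 := by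
  intro j
  induction j with
  | zero => have := Nat.mod_two_eq_zero_or_one (f 0); rw [can]; omega
  | succ j ih => have := can_succ_le f j; omega

lemma can_le {f g : ℕ → ℕ} (hg : Monotone g) (hpar : ∀ j, g j % 2 = f j % 2) :
    ∀ j, can f j ≤ g j := by
  intro j
  induction j with
  | zero =>
    rw [can, ← hpar 0]
    exact Nat.mod_le _ _
  | succ j ih =>
    rw [can]
    have hm : g j ≤ g (j + 1) := hg (Nat.le_succ j)
    split
    · omega
    · next h =>
      have h1 : g (j + 1) ≠ g j := by
        intro he
        have := hpar (j+1)
        have := hpar j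
        omega
      omega

lemma can_congr {f g : ℕ → ℕ} (h : ∀ i, f i % 2 = g i % 2) : ∀ j, can f j = can g j := by
  intro j
  induction j with
  | zero => rw [can, can, h]
  | succ j ih => rw [can, can, ih, h, h]

/-- `δ`-type map: insert a gap at value `c`. -/
def insf (c : ℕ) : ℕ → ℕ := fun v => if v < c then v else v + 1

/-- `σ`-type map: collapse at value `c` (i.e. `σ_{c-1}`). -/
def colf (c : ℕ) : ℕ → ℕ := fun v => if v < c then v else v - 1

lemma insf_mono (c : ℕ) : Monotone (insf c) := by
  intro a b h
  unfold insf
  split <;> split <;> omega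

lemma colf_mono (c : ℕ) : Monotone (colf c) := by
  intro a b h
  unfold colf
  split <;> split <;> omega

section
open SimplexCategory

variable {K : SSet.{0}}

/-- The tower relations: `R1` (top face) and `R2` (interior faces are degeneracies),
for all levels up to `N`. -/
def Rel (K : SSet) (a : ∀ k : ℕ, K.obj (Opposite.op (⦋k⦌ : SimplexCategory))) (N : ℕ) : Prop :=
  (∀ k, k + 1 ≤ N →
    amap K (x := ⦋k⦌) (n := k + 1) id monotone_id (Nat.le_succ k) (a (k + 1)) = a k) ∧
  (∀ k c, k + 2 ≤ N → 1 ≤ c → ∀ (_ : c ≤ k + 1),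
    amap K (x := ⦋k + 1⦌) (n := k + 2) (insf c) (insf_mono c)
      (by unfold insf; simp only [len_mk]; split <;> omega) (a (k + 2)) =
    amap K (x := ⦋k + 1⦌) (n := k) (colf c) (colf_mono c)
      (by unfold colf; simp only [len_mk]; split <;> omega) (a k))

lemma raise {a : ∀ k : ℕ, K.obj (Opposite.op (⦋k⦌ : SimplexCategory))} {N : ℕ}
    (h : Rel K a N) {n : ℕ} (hn : n + 1 ≤ N) {x : SimplexCategory} (f : ℕ → ℕ)
    (hf : Monotone f) (hb : f x.len ≤ n) (hb' : f x.len ≤ n + 1) :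
    amap K f hf hb (a n) = amap K f hf hb' (a (n + 1)) := by
  rw [← h.1 n hn, amap_amap f id hf hb monotone_id (Nat.le_succ n) (by exact hf) (by
    show f x.len ≤ n + 1; omega)]
  exact amap_congr (fun j hj => rfl) _

lemma raise_to {a : ∀ k : ℕ, K.obj (Opposite.op (⦋k⦌ : SimplexCategory))} {N : ℕ}
    (h : Rel K a N) {n n' : ℕ} (hnn : n ≤ n') {x : SimplexCategory} (f : ℕ → ℕ)
    (hf : Monotone f) (hb : f x.len ≤ n) :
    ∀ (_ : n' ≤ N) (hb' : f x.len ≤ n'),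
      amap K f hf hb (a n) = amap K f hf hb' (a n') := by
  induction n', hnn using Nat.le_induction with
  | base => intro _ _; exact amap_congr (fun j hj => rfl) _
  | succ n' hnn ih =>
    intro hn' hb'
    rw [← raise h hn' f hf (le_trans hb hnn) hb']
    exact ih (by omega) (le_trans hb hnn)

/-- Reduction to the canonical lift, by repeatedly lowering values by 2 using the
tower relations. -/
lemma to_can {a : ∀ k : ℕ, K.obj (Opposite.op (⦋k⦌ : SimplexCategory))} {N : ℕ}
    (h : Rel K a N) {n : ℕ} (hn : n ≤ N) {m : ℕ} :
    ∀ (s : ℕ) (f : ℕ → ℕ) (hf : Monotone f) (_ : ∀ j, m ≤ j → f j = f m)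
      (hb : ∀ j, f j ≤ n) (_ : (∑ j ∈ Finset.range (m + 1), f j) ≤ s)
      (hbm : f m ≤ n) (hbc : can f m ≤ n),
      amap K (x := ⦋m⦌) f hf hbm (a n) = amap K (can f) (can_mono f) hbc (a n) := by
  intro s
  induction s with
  | zero =>
    intro f hf hnorm hb hs hbm hbc
    have hzero : ∀ i ≤ m, f i = 0 := fun i hi => by
      have : f i ≤ ∑ j ∈ Finset.range (m + 1), f j :=
        Finset.single_le_sum (f := fun i => f i) (fun i _ => Nat.zero_le _)
          (Finset.mem_range.mpr (by omega))
      omega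
    have hcan0 : ∀ j, (∀ i ≤ j, f i = 0) → can f j = 0 := by
      intro j
      induction j with
      | zero => intro h0; rw [can, h0 0 (le_refl 0)]
      | succ j ih =>
        intro h0
        rw [can, ih (fun i hi => h0 i (by omega)), h0 (j + 1) (le_refl _), h0 j (by omega)]
        simp
    refine amap_congr (fun j hj => ?_) _
    have hj' : j ≤ m := hj
    rw [hzero j hj', hcan0 j (fun i hi => hzero i (by omega))]
  | succ s ih =>
    intro f hf hnorm hb hs hbm hbc
    by_cases hall : ∀ j ≤ m, f j = can f j
    · refine amap_congr (fun j hj => ?_) _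
      exact hall j hj
    · push_neg at hall
      obtain ⟨jw, hjwm, hjw⟩ := hall
      have hex : ∃ j, f j ≠ can f j := ⟨jw, hjw⟩
      set j₀ := Nat.find hex with hj₀def
      have hj₀ : f j₀ ≠ can f j₀ := Nat.find_spec hex
      have hj₀m : j₀ ≤ m := Nat.find_min' hex hjw |>.trans hjwm
      have hlt : ∀ i < j₀, f i = can f i := fun i hi => by
        by_contra hne
        exact absurd (Nat.find_min' hex hne) (by omega)
      have hcanle : ∀ j, can f j ≤ f j := can_le hf (fun _ => rfl)
      -- on and after j₀, f exceeds can by at least 2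
      have hge : ∀ i, j₀ ≤ i → can f i + 2 ≤ f i := by
        intro i hi
        induction i, hi using Nat.le_induction with
        | base =>
          have h1 := can_mod f j₀
          have h2 := hcanle j₀
          omega
        | succ i hi ih =>
          have h2 := can_succ_le f i
          have h3 : f i ≤ f (i + 1) := hf (Nat.le_succ i)
          have h4 := can_mod f (i + 1)
          have h5 := hcanle (i + 1)
          omega
      set c := f j₀ with hcdef
      have hc2 : 2 ≤ c := by have := hge j₀ (le_refl _); omega
      have hcn : c ≤ n := hb j₀
      obtain ⟨k, rfl⟩ : ∃ k, n = k + 2 := ⟨n - 2, by omega⟩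
      have hsmall : ∀ j < j₀, f j ≤ c - 2 := fun j hj => by
        have h1 := hlt j hj
        have h2 := can_mono f (le_of_lt hj)
        have h3 := hge j₀ (le_refl _)
        omega
      have hbig : ∀ j, j₀ ≤ j → c ≤ f j := fun j hj => hf hj
      -- the lowered function
      set f' : ℕ → ℕ := fun j => if j < j₀ then f j else f j - 2 with hf'def
      have hf'mono : Monotone f' := by
        intro u v huv
        simp only [hf'def]
        split <;> split
        · exact hf huv
        · next h1 h2 =>
          have := hsmall u h1
          have := hbig v (by omega)
          omega
        · omega
        · have := hf huv; omega
      have hf'norm : ∀ j, m ≤ j → f' j = f' m := by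
        intro j hj
        simp only [hf'def]
        rw [hnorm j hj]
        have h₁ : ¬ m < j₀ := by omega
        have h₂ : ¬ j < j₀ := by omega
        rw [if_neg h₁, if_neg h₂]
      have hf'b : ∀ j, f' j ≤ k + 2 := by
        intro j
        simp only [hf'def]
        split
        · exact hb j
        · have := hb j; omega
      have hf'par : ∀ i, f' i % 2 = f i % 2 := by
        intro i
        simp only [hf'def]
        split
        · rfl
        · next hge2 =>
          have := hge i (by omega)
          omega
      have hcan' : ∀ j, can f' j = can f j := can_congr hf'par
      -- the intermediate map p
      set p : ℕ → ℕ := fun j => if j < j₀ then f j else f j - 1 with hpdef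
      have hpmono : Monotone p := by
        intro u v huv
        simp only [hpdef]
        split <;> split
        · exact hf huv
        · next h1 h2 =>
          have := hsmall u h1
          have := hbig v (by omega)
          omega
        · omega
        · have := hf huv; omega
      have hpb : p m ≤ k + 1 := by
        simp only [hpdef]
        have := hb m
        have := hbig m hj₀m
        split <;> omega
      -- key step : amap f = amap f'
      have hkey : amap K (x := ⦋m⦌) f hf hbm (a (k + 2))
          = amap K (x := ⦋m⦌) f' hf'mono (hf'b m) (a (k + 2)) := by
        have e1 : amap K (x := ⦋m⦌) f hf hbm (a (k + 2))
            = amap K (x := ⦋m⦌) p hpmono hpb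
                (amap K (x := ⦋k+1⦌) (insf (c - 1)) (insf_mono _)
                  (by unfold insf; simp only [len_mk]; split <;> omega) (a (k + 2))) := by
          rw [amap_amap p (insf (c-1)) hpmono hpb (insf_mono _)
            (by unfold insf; split <;> omega)
            ((insf_mono _).comp hpmono) (by
              show insf (c-1) (p m) ≤ k + 2
              have h1' := hb m
              unfold insf
              simp only [hpdef]
              rw [if_neg (by omega : ¬ m < j₀)]
              split <;> omega)]
          refine amap_congr (fun j hj => ?_) _
          show f j = insf (c - 1) (p j)
          unfold insf
          simp only [hpdef]
          rcases Nat.lt_or_ge j j₀ with h1 | h1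
          · have := hsmall j h1
            simp only [if_pos h1]
            rw [if_pos (by omega)]
          · have := hbig j h1
            simp only [if_neg (by omega : ¬ j < j₀)]
            rw [if_neg (by omega)]
            omega
        rw [e1, h.2 k (c - 1) (by omega) (by omega) (by omega)]
        rw [amap_amap p (colf (c-1)) hpmono hpb (colf_mono _)
          (by have := hcn; unfold colf; split <;> omega)
          ((colf_mono _).comp hpmono) (by
            show colf (c-1) (p m) ≤ k
            have h1' := hb m
            have h2' := hbig m hj₀m
            unfold colf
            simp only [hpdef]
            rw [if_neg (by omega : ¬ m < j₀)]
            split <;> omega)]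
        have e2 : amap K (x := ⦋m⦌) (colf (c-1) ∘ p) ((colf_mono _).comp hpmono)
            (by show colf (c-1) (p m) ≤ k
                have h1' := hb m
                have h2' := hbig m hj₀m
                unfold colf
                simp only [hpdef]
                rw [if_neg (by omega : ¬ m < j₀)]
                split <;> omega) (a k)
            = amap K (x := ⦋m⦌) f' hf'mono (by
                simp only [hf'def]
                rw [if_neg (by omega : ¬ m < j₀)]
                have := hb m
                omega : f' m ≤ k) (a k) := by
          refine amap_congr (fun j hj => ?_) _
          show colf (c - 1) (p j) = f' j
          unfold colf
          simp only [hpdef, hf'def]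
          rcases Nat.lt_or_ge j j₀ with h1 | h1
          · have := hsmall j h1
            simp only [if_pos h1]
            rw [if_pos (by omega)]
          · have := hbig j h1
            simp only [if_neg (by omega : ¬ j < j₀)]
            rw [if_neg (by omega)]
            omega
        rw [e2]
        exact raise_to (x := ⦋m⦌) h (by omega) f' hf'mono (by
          show f' m ≤ k
          simp only [hf'def]
          rw [if_neg (by omega : ¬ m < j₀)]
          have := hb m
          omega) hn (hf'b m)
      rw [hkey]
      have hsum : (∑ j ∈ Finset.range (m + 1), f' j) ≤ s := by
        have h1 : ∀ j ∈ Finset.range (m + 1), f' j ≤ f j := by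
          intro j _
          simp only [hf'def]
          split <;> omega
        have h2 : f' j₀ < f j₀ := by
          simp only [hf'def]
          rw [if_neg (by omega)]
          omega
        have h3 : (∑ j ∈ Finset.range (m + 1), f' j) < ∑ j ∈ Finset.range (m + 1), f j :=
          Finset.sum_lt_sum h1 ⟨j₀, Finset.mem_range.mpr (by omega), h2⟩
        omega
      rw [ih f' hf'mono hf'norm hf'b hsum (hf'b m) (by rw [hcan' m]; exact hbc)]
      exact amap_congr (fun j hj => hcan' j) _

/-- The central well-definedness lemma: pullbacks of tower simplices along maps with
equal parity words agree. -/
lemma amap_eq {a : ∀ k : ℕ, K.obj (Opposite.op (⦋k⦌ : SimplexCategory))} {N : ℕ}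
    (h : Rel K a N) {n₁ n₂ : ℕ} (h1 : n₁ ≤ N) (h2 : n₂ ≤ N) {m : ℕ}
    (f g : ℕ → ℕ) (hf : Monotone f) (hg : Monotone g) (hb1 : f m ≤ n₁) (hb2 : g m ≤ n₂)
    (hpar : ∀ j ≤ m, f j % 2 = g j % 2) :
    amap K (x := ⦋m⦌) f hf hb1 (a n₁) = amap K (x := ⦋m⦌) g hg hb2 (a n₂) := by
  set fn : ℕ → ℕ := fun j => f (min j m) with hfndef
  set gn : ℕ → ℕ := fun j => g (min j m) with hgndef
  have hfnmono : Monotone fn := fun u v huv => hf (by omega)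
  have hgnmono : Monotone gn := fun u v huv => hg (by omega)
  have hfnb : ∀ j, fn j ≤ N := fun j => le_trans (le_trans (hf (by omega)) hb1) h1
  have hgnb : ∀ j, gn j ≤ N := fun j => le_trans (le_trans (hg (by omega)) hb2) h2
  have hfnorm : ∀ j, m ≤ j → fn j = fn m := fun j hj => by
    simp only [hfndef]; rw [Nat.min_eq_right hj, Nat.min_self]
  have hgnorm : ∀ j, m ≤ j → gn j = gn m := fun j hj => by
    simp only [hgndef]; rw [Nat.min_eq_right hj, Nat.min_self]
  have e1 : amap K (x := ⦋m⦌) f hf hb1 (a n₁)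
      = amap K (x := ⦋m⦌) fn hfnmono (by simp only [hfndef, Nat.min_self, len_mk]; exact hb1)
          (a n₁) :=
    amap_congr (fun j hj => by
      have hj' : j ≤ m := hj
      simp only [hfndef]; rw [Nat.min_eq_left hj']) _
  have e2 : amap K (x := ⦋m⦌) g hg hb2 (a n₂)
      = amap K (x := ⦋m⦌) gn hgnmono (by simp only [hgndef, Nat.min_self, len_mk]; exact hb2)
          (a n₂) :=
    amap_congr (fun j hj => by
      have hj' : j ≤ m := hj
      simp only [hgndef]; rw [Nat.min_eq_left hj']) _
  rw [e1, e2]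
  rw [raise_to (x := ⦋m⦌) h h1 fn hfnmono (by show f (min m m) ≤ n₁; rw [Nat.min_self]; exact hb1) (le_refl N) (hfnb m),
      raise_to (x := ⦋m⦌) h h2 gn hgnmono (by show g (min m m) ≤ n₂; rw [Nat.min_self]; exact hb2) (le_refl N) (hgnb m)]
  rw [to_can h (le_refl N) _ fn hfnmono hfnorm hfnb (le_refl _) (hfnb m)
      (le_trans (can_le hfnmono (fun _ => rfl) m) (hfnb m)),
    to_can h (le_refl N) _ gn hgnmono hgnorm hgnb (le_refl _) (hgnb m)
      (le_trans (can_le hgnmono (fun _ => rfl) m) (hgnb m))]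
  have hcan : ∀ j, can fn j = can gn j :=
    can_congr (fun i => by simp only [hfndef, hgndef]; exact hpar _ (by omega))
  exact amap_congr (fun j hj => hcan j) _

end
section
open SimplexCategory

variable {K : SSet.{0}}

lemma can_min (p : ℕ) : ∀ j, can (fun i => min i p) j = min j p := by
  intro j
  induction j with
  | zero => rw [can]; simp
  | succ j ih =>
    rw [can, ih]
    rcases Nat.lt_or_ge j p with h1 | h1
    · rw [if_neg (by
        rw [Nat.min_eq_left (by omega), Nat.min_eq_left (by omega)]
        omega)]
      omega
    · rw [if_pos (by rw [Nat.min_eq_right (by omega), Nat.min_eq_right (by omega)])]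
      omega

lemma can_bound_of_missing {v : ℕ → ℕ} (hv : Monotone v) {n d : ℕ} (hd1 : 1 ≤ d)
    (hdn : d ≤ n + 2) (hvb : ∀ j, v j ≤ n + 2) (hvd : ∀ j, v j ≠ d) :
    ∀ j, can v j ≤ n + 1 := by
  set g : ℕ → ℕ := fun j => if v j < d then v j else v j - 2 with hgdef
  have hgmono : Monotone g := by
    intro u u' huu
    have h1 := hv huu
    have h2 := hvd u
    have h3 := hvd u'
    simp only [hgdef]
    split <;> split <;> omega
  have hgpar : ∀ j, g j % 2 = v j % 2 := by
    intro j
    have h2 := hvd j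
    simp only [hgdef]
    split
    · rfl
    · omega
  intro j
  have h1 := can_le hgmono hgpar j
  have h2 : g j ≤ n + 1 := by
    have h3 := hvb j
    have h4 := hvd j
    simp only [hgdef]
    split <;> omega
  omega

/-- Construction of the next level of the tower by filling a `Λ[n+2, 0]` horn. -/
lemma exists_next (hK : IsKanComplex K) {a : ∀ k : ℕ, K.obj (Opposite.op (⦋k⦌ : SimplexCategory))}
    {n : ℕ} (h : Rel K a (n + 1)) :
    ∃ z : K.obj (Opposite.op (⦋n + 2⦌ : SimplexCategory)),
      ∀ (m : ℕ) (f : ℕ → ℕ) (hf : Monotone f) (hb : f m ≤ n + 2)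
        (d : ℕ) (_ : 1 ≤ d) (_ : d ≤ n + 2) (_ : ∀ j, f (min j m) ≠ d)
        (hbc : can (fun i => f (min i m)) m ≤ n + 1),
        amap K (x := ⦋m⦌) f hf hb z
          = amap K (can (fun i => f (min i m))) (can_mono _) hbc (a (n + 1)) := by
  classical
  have hbnd : ∀ (x : SimplexCategoryᵒᵖ) (s : (Λ[n+2, 0] : SSet).obj x),
      ∀ j, can (vf s.1.down) j ≤ n + 1 := by
    intro x s j
    obtain ⟨d, hd⟩ := (Set.ne_univ_iff_exists_notMem _).mp s.2
    simp only [Set.mem_union, Set.mem_range, Set.mem_singleton_iff, not_or, not_exists] at hd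
    have hd1 : 1 ≤ d.1 := by
      have : d ≠ 0 := hd.2
      have : d.1 ≠ 0 := fun hc => this (Fin.ext hc)
      omega
    refine can_bound_of_missing (vf_mono _) hd1 (by have := d.2; omega) (fun i => vf_le _ i) (fun i hc => ?_) j
    exact hd.1 _ (Fin.ext hc)
  let H : (Λ[n+2, 0] : SSet) ⟶ K :=
    { app := fun x => ↾fun s =>
        amap K (x := x.unop) (can (vf s.1.down)) (can_mono _) (hbnd x s x.unop.len) (a (n + 1))
      naturality := by
        intro x y φ
        ext s
        show amap K (can (vf ((Λ[n+2,0] : SSet).map φ s).1.down)) _ _ (a (n + 1))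
          = K.map φ (amap K (can (vf s.1.down)) _ _ (a (n + 1)))
        rw [← Quiver.Hom.op_unop φ,
          amap_naturality φ.unop (can (vf s.1.down)) (can_mono _) _
            ((can_mono _).comp (vf_mono _)) (le_trans (hbnd x s _) (le_refl _)) (a (n + 1))]
        have hcomp : ∀ i, vf ((Λ[n+2,0] : SSet).map φ.unop.op s).1.down i
            = vf s.1.down (vf φ.unop i) := by
          intro i
          show vf (φ.unop ≫ s.1.down) i = vf s.1.down (vf φ.unop i)
          show (s.1.down.toOrderHom (φ.unop.toOrderHom ⟨min i y.unop.len, _⟩)).1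
            = (s.1.down.toOrderHom ⟨min (vf φ.unop i) x.unop.len, _⟩).1
          congr 2
          apply Fin.ext
          show (φ.unop.toOrderHom ⟨min i y.unop.len, _⟩).1
            = min ((φ.unop.toOrderHom ⟨min i y.unop.len, _⟩).1) x.unop.len
          rw [Nat.min_eq_left (Nat.le_of_lt_succ (Fin.is_lt _))]
        exact amap_eq (m := y.unop.len) h (le_refl _) (le_refl _) _ _ (can_mono _)
          ((can_mono _).comp (vf_mono _)) _ _
          (fun j _ => by
            have hc1 := can_mod (vf ((Λ[n+2,0] : SSet).map φ.unop.op s).1.down) j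
            have hc2 := can_mod (vf s.1.down) (vf φ.unop j)
            show _ % 2 = can (vf s.1.down) (vf φ.unop j) % 2
            rw [hc1, hc2, hcomp j]) }
  obtain ⟨gf, hgf⟩ := hK (n := n + 2) (by omega) 0 H
  refine ⟨gf.app (Opposite.op ⦋n+2⦌) (ULift.up (𝟙 (⦋n+2⦌ : SimplexCategory))), ?_⟩
  intro m f hf hb d hd1 hd2 hdm hbc
  have hfd : ∀ (j : Fin (m + 1)),
      ((toHom (x := ⦋m⦌) f hf hb).toOrderHom j : ℕ) ≠ d := by
    intro j hc
    exact hdm j.1 (by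
      rw [Nat.min_eq_left (Nat.le_of_lt_succ j.2)]
      exact hc)
  have hprop : Set.range (SSet.stdSimplex.asOrderHom (ULift.up (toHom (x := ⦋m⦌) f hf hb)
      : Δ[n+2].obj (Opposite.op ⦋m⦌))) ∪ {(0 : Fin (n+3))} ≠ Set.univ := by
    intro hcon
    have := (Set.eq_univ_iff_forall.mp hcon) ⟨d, by omega⟩
    simp only [Set.mem_union, Set.mem_range, Set.mem_singleton_iff] at this
    rcases this with ⟨j, hj⟩ | h0
    · exact hfd j (congrArg Fin.val hj)
    · have : d = 0 := congrArg Fin.val h0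
      omega
  have h1 : amap K (x := ⦋m⦌) f hf hb
      (gf.app (Opposite.op ⦋n+2⦌) (ULift.up (𝟙 (⦋n+2⦌ : SimplexCategory))))
      = gf.app (Opposite.op ⦋m⦌) (ULift.up (toHom (x := ⦋m⦌) f hf hb)) := by
    show K.map (toHom (x := ⦋m⦌) f hf hb).op _ = _
    refine (NatTrans.naturality_apply gf (toHom (x := ⦋m⦌) f hf hb).op _).symm.trans ?_
    exact congrArg (gf.app (Opposite.op ⦋m⦌)) (congrArg ULift.up (Category.comp_id (toHom (x := ⦋m⦌) f hf hb)))
  have h2 : gf.app (Opposite.op ⦋m⦌) (ULift.up (toHom (x := ⦋m⦌) f hf hb))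
      = H.app (Opposite.op ⦋m⦌) ⟨ULift.up (toHom (x := ⦋m⦌) f hf hb), hprop⟩ := by
    rw [← hgf]; rfl
  rw [h1, h2]
  show amap K (can (vf (toHom (x := ⦋m⦌) f hf hb))) _ _ (a (n + 1))
    = amap K (can (fun i => f (min i m))) _ _ (a (n + 1))
  exact amap_congr (fun j _ => rfl) _

end
section
open SimplexCategory

variable {K : SSet.{0}}

lemma rel_succ (hK : IsKanComplex K) {a : ∀ k : ℕ, K.obj (Opposite.op (⦋k⦌ : SimplexCategory))}
    {n : ℕ} (h : Rel K a (n + 1)) :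
    ∃ a' : ∀ k : ℕ, K.obj (Opposite.op (⦋k⦌ : SimplexCategory)),
      Rel K a' (n + 2) ∧ ∀ k ≤ n + 1, a' k = a k := by
  classical
  obtain ⟨z, hz⟩ := exists_next hK h
  refine ⟨Function.update a (n + 2) z, ⟨?_, ?_⟩, fun k hk =>
    Function.update_of_ne (by omega) _ _⟩
  · -- R1
    intro k hk
    rcases Nat.lt_or_ge (k + 1) (n + 2) with hlt | hge
    · rw [Function.update_of_ne (by omega : k + 1 ≠ n + 2),
        Function.update_of_ne (by omega : k ≠ n + 2)]
      exact h.1 k (by omega)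
    · have hk2 : k = n + 1 := by omega
      subst hk2
      rw [Function.update_self, Function.update_of_ne (by omega : n + 1 ≠ n + 2)]
      have hm := hz (n + 1) id monotone_id (by show (n+1:ℕ) ≤ n+2; omega) (n + 2) (by omega) (by omega)
        (fun j => by
          show min j (n + 1) ≠ n + 2
          have := Nat.min_le_right j (n + 1)
          omega)
        (by
          show can (fun i => min i (n + 1)) (n + 1) ≤ n + 1
          rw [can_min]
          omega)
      rw [show amap K (x := ⦋n+1⦌) id monotone_id (Nat.le_succ (n+1)) z
        = amap K (x := ⦋n+1⦌) id monotone_id (by show (n+1:ℕ) ≤ n+2; omega) z from rfl, hm]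
      exact (amap_congr (g := id) (hg := monotone_id) (hbg := le_refl _) (fun j hj => by
        have hj' : j ≤ n + 1 := hj
        have h1 := can_min (n + 1) j
        show can (fun i => min i (n + 1)) j = j
        rw [h1]
        omega) _).trans (amap_id _ _ _)
  · -- R2
    intro k c hk hc1 hc
    rcases Nat.lt_or_ge (k + 2) (n + 2) with hlt | hge
    · rw [Function.update_of_ne (by omega : k + 2 ≠ n + 2),
        Function.update_of_ne (by omega : k ≠ n + 2)]
      exact h.2 k c (by omega) hc1 hc
    · have hk2 : k = n := by omega
      subst hk2
      rw [Function.update_self, Function.update_of_ne (by omega : k ≠ k + 2)]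
      have hmiss : ∀ j, insf c (min j (k + 1)) ≠ c := by
        intro j
        unfold insf
        split <;> omega
      have hbnd : can (fun i => insf c (min i (k + 1))) (k + 1) ≤ k + 1 := by
        refine can_bound_of_missing ((insf_mono c).comp (fun u v huv => by omega))
          hc1 (by omega)
          (fun j => show insf c (min j (k+1)) ≤ k + 2 by
            unfold insf; have := Nat.min_le_right j (k+1); split <;> omega)
          hmiss (k + 1)
      have hm := hz (k + 1) (insf c) (insf_mono c)
        (show insf c (k+1) ≤ k + 2 by unfold insf; split <;> omega)
        c hc1 (by omega) hmiss hbnd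
      rw [hm]
      refine amap_eq h (le_refl _) (by omega) _ _ (can_mono _) (colf_mono c) hbnd
        (show colf c (k+1) ≤ k by unfold colf; split <;> omega) (fun j hj => ?_)
      have h1 := can_mod (fun i => insf c (min i (k + 1))) j
      have hj' : j ≤ k + 1 := hj
      have h2 : min j (k + 1) = j := by omega
      rw [h1, h2]
      unfold insf colf
      split <;> omega

lemma exists_tower (hK : IsKanComplex K) (x0 : K.obj (Opposite.op (⦋1⦌ : SimplexCategory))) :
    ∃ a : ∀ k : ℕ, K.obj (Opposite.op (⦋k⦌ : SimplexCategory)),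
      (∀ N, Rel K a N) ∧ a 1 = x0 := by
  classical
  set a0 : ∀ k : ℕ, K.obj (Opposite.op (⦋k⦌ : SimplexCategory)) := fun k =>
    match k with
    | 0 => amap K (x := ⦋0⦌) (n := 1) id monotone_id (by show (0:ℕ) ≤ 1; omega) x0
    | 1 => x0
    | (k + 2) => amap K (x := ⦋k + 2⦌) (n := 1) (fun _ => 0) monotone_const (by show (0:ℕ) ≤ 1; omega) x0
    with ha0
  have hbase : Rel K a0 1 := by
    constructor
    · intro k hk
      have hk0 : k = 0 := by omega
      subst hk0
      rfl
    · intro k c hk _ _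
      omega
  have hstep : ∀ N, 1 ≤ N → ∀ b, Rel K b N →
      ∃ b', Rel K b' (N + 1) ∧ ∀ k ≤ N, b' k = b k := by
    intro N hN b hb
    obtain ⟨n, rfl⟩ : ∃ n, N = n + 1 := ⟨N - 1, by omega⟩
    exact rel_succ hK hb
  let seq : ∀ N : ℕ, {b : ∀ k : ℕ, K.obj (Opposite.op (⦋k⦌ : SimplexCategory)) // Rel K b (N + 1)} :=
    fun N => Nat.rec ⟨a0, hbase⟩
      (fun M prev => ⟨(hstep (M + 1) (by omega) prev.1 prev.2).choose,
        (hstep (M + 1) (by omega) prev.1 prev.2).choose_spec.1⟩) N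
  have hseqsucc : ∀ N k, k ≤ N + 1 → (seq (N + 1)).1 k = (seq N).1 k := fun N k hk =>
    (hstep (N + 1) (by omega) (seq N).1 (seq N).2).choose_spec.2 k hk
  have hstable : ∀ (M N : ℕ), N ≤ M → ∀ k ≤ N + 1, (seq M).1 k = (seq N).1 k := by
    intro M
    induction M with
    | zero =>
      intro N hNM k hk
      have : N = 0 := by omega
      subst this
      rfl
    | succ M ih =>
      intro N hNM k hk
      by_cases hNM' : N = M + 1
      · subst hNM'; rfl
      · have hN : N ≤ M := by omega
        rw [hseqsucc M k (by omega), ih N hN k hk]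
  have hagree : ∀ N k, k ≤ N + 1 → (seq k).1 k = (seq N).1 k := by
    intro N k hk
    rcases le_or_gt k N with h1 | h1
    · exact (hstable N k h1 k (by omega)).symm
    · have : k = N + 1 := by omega
      subst this
      exact hseqsucc N (N + 1) (by omega)
  refine ⟨fun k => (seq k).1 k, fun N => ⟨?_, ?_⟩, ?_⟩
  · intro k hk
    beta_reduce
    rw [hagree N (k + 1) (by omega), hagree N k (by omega)]
    exact (seq N).2.1 k (by omega)
  · intro k c hk hc1 hc
    beta_reduce
    rw [hagree N (k + 2) (by omega), hagree N k (by omega)]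
    exact (seq N).2.2 k c (by omega) hc1 hc
  · beta_reduce
    rw [hagree 0 1 (by omega)]
    rfl

end
section
open SimplexCategory

/-- Numerical value of an object of `TwoObj`. -/
def tv (t : TwoObj) : ℕ := match t with
  | TwoObj.zero => 0
  | TwoObj.one => 1

/-- The word of vertices of a simplex of the nerve of `TwoObj`. -/
def wordF {m : ℕ} (F : CategoryTheory.ComposableArrows TwoObj m) : ℕ → ℕ :=
  fun j => tv (F.obj ⟨min j m, Nat.lt_succ_of_le (Nat.min_le_right _ _)⟩)

/-- Every edge of a Kan complex is invertible. -/
theorem edge_invertible {K : SSet} (hK : IsKanComplex K) (x : Δ[1] ⟶ K) :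
    IsInvertibleEdge x := by
  obtain ⟨a, hrel, ha1⟩ := exists_tower hK (SSet.yonedaEquiv (X := K) (n := ⦋1⦌) x)
  refine ⟨⟨fun xo => ↾fun F => amap K (x := xo.unop)
      (can (wordF F)) (can_mono _) (can_le_succ _ _) (a (xo.unop.len + 1)), ?_⟩, ?_⟩
  · intro xo yo φ
    ext F
    show amap K (can (wordF (bDelta1.map φ F))) _ _ (a (yo.unop.len + 1))
      = K.map φ (amap K (can (wordF F)) _ _ (a (xo.unop.len + 1)))
    have hw : ∀ i, wordF (bDelta1.map φ.unop.op F) i = wordF F (vf φ.unop i) := by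
      intro i
      show tv ((bDelta1.map φ.unop.op F).obj ⟨min i yo.unop.len, _⟩)
        = tv (F.obj ⟨min (vf φ.unop i) xo.unop.len, _⟩)
      congr 1
      show F.obj (φ.unop.toOrderHom ⟨min i yo.unop.len, _⟩)
        = F.obj ⟨min (vf φ.unop i) xo.unop.len, _⟩
      congr 1
      apply Fin.ext
      show (φ.unop.toOrderHom ⟨min i yo.unop.len, _⟩).1
        = min (vf φ.unop i) xo.unop.len
      rw [Nat.min_eq_left (vf_le φ.unop i)]
      rfl
    rw [← Quiver.Hom.op_unop φ,
      amap_naturality φ.unop (can (wordF F)) (can_mono _) (can_le_succ _ _)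
        ((can_mono _).comp (vf_mono _))
        (le_trans (can_le_succ _ _) (by have := vf_le φ.unop yo.unop.len; omega))
        (a (xo.unop.len + 1))]
    refine amap_eq (m := yo.unop.len) (hrel (max (yo.unop.len + 1) (xo.unop.len + 1)))
      (le_max_left _ _) (le_max_right _ _) _ _ (can_mono _)
      ((can_mono _).comp (vf_mono _)) (can_le_succ _ _)
      (le_trans (can_le_succ _ _) (by have := vf_le φ.unop yo.unop.len; omega))
      (fun j _ => ?_)
    have c1 := can_mod (wordF (bDelta1.map φ.unop.op F)) j
    have c2 := can_mod (wordF F) (vf φ.unop j)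
    show _ % 2 = can (wordF F) (vf φ.unop j) % 2
    rw [c1, c2, hw j]
  · apply (SSet.yonedaEquiv (X := K) (n := ⦋1⦌)).injective
    rw [yE_comp]
    have hd : SSet.yonedaEquiv (X := bDelta1) (n := ⦋1⦌) deltaB
        = CategoryTheory.ComposableArrows.mk₁ (homOfLE trivial : TwoObj.zero ⟶ TwoObj.one) :=
      Equiv.apply_symm_apply _ _
    rw [hd]
    set F := CategoryTheory.ComposableArrows.mk₁
      (homOfLE trivial : TwoObj.zero ⟶ TwoObj.one) with hF
    show amap K (can (wordF (m := 1) F)) _ _ (a 2) = SSet.yonedaEquiv (X := K) (n := ⦋1⦌) x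
    have hw0 : wordF (m := 1) F 0 = 0 := rfl
    have hw1 : wordF (m := 1) F 1 = 1 := rfl
    have hc0 : can (wordF (m := 1) F) 0 = 0 := by rw [can, hw0]
    have hc1 : can (wordF (m := 1) F) 1 = 1 := by
      rw [can, hc0, hw0, hw1]
      norm_num
    have e1 : amap K (x := ⦋1⦌) (can (wordF (m := 1) F)) (can_mono _) (can_le_succ _ _) (a 2)
        = amap K (x := ⦋1⦌) (n := 1) id monotone_id (le_refl _) (a 1) := by
      refine amap_eq (n₁ := 2) (n₂ := 1) (hrel 2) (le_refl 2) (Nat.le_succ 1) _ _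
        (can_mono _) monotone_id (can_le_succ _ _) (Nat.le_refl 1) (fun j hj => ?_)
      have hj' : j ≤ 1 := hj
      interval_cases j
      · rw [hc0]; rfl
      · rw [hc1]; rfl
    rw [e1, amap_id, ha1]

end

end EdgeInv

/-- `G` is right adjoint to the identity relative to Kan complexes:
for every simplicial set `X`, Kan complex `K` and map `f : K ⟶ X`, there is a unique
`g : K ⟶ G X` with `ε_X ∘ g = f`. -/
theorem G_is_relative_right_adjoint (X K : SSet) (hK : IsKanComplex K) (f : K ⟶ X) :
    ∃! g : K ⟶ GObj X, g ≫ epsilon X = f := by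
  have hg : ∀ (n : SimplexCategoryᵒᵖ) (k : K.obj n), f.app n k ∈ GSet X n := by
    intro n k e
    have h1 : (SSet.yonedaEquiv (X := X) (n := n.unop)).symm (f.app n k)
        = (SSet.yonedaEquiv (X := K) (n := n.unop)).symm k ≫ f := yE_symm_comp f k
    rw [h1, ← Category.assoc]
    obtain ⟨y, hy⟩ := EdgeInv.edge_invertible hK (e ≫ (SSet.yonedaEquiv (X := K) (n := n.unop)).symm k)
    exact ⟨y ≫ f, by rw [← Category.assoc, hy]⟩
  refine ⟨⟨fun n => ↾fun k => ⟨f.app n k, hg n k⟩, fun n m φ => by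
    ext k
    have h := NatTrans.naturality_apply f φ k
    exact Subtype.ext h⟩, ?_, ?_⟩
  · rfl
  · intro g' hg'
    apply SSet.hom_ext
    intro n
    ext k
    apply Subtype.ext
    show (g'.app n k).1 = f.app n k
    exact congrArg (fun (h : K ⟶ X) => h.app n k) hg'

end IndexedPaper
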